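/- arXiv:2012.10713 — 2 statements merged into one kernel-verified Lean document; each statement's English description precedes it below -/
import Mathlib

section
/- Let y, a ∈ ℝ^d be nonzero, Σ positive definite, and λ ≥ 0. The minimum of λ⟨a,Va⟩ − ⟨y,Vy⟩ over symmetric V with 0 ⪯ V ⪯ Σ equals ½[ λ⟨a,Σa⟩ − ⟨y,Σy⟩ − √( (λ⟨a,Σa⟩ + ⟨y,Σy⟩)² − 4λ⟨a,Σy⟩² ) ]. -/
open Matrix

lemma dot_symm' {d : ℕ} (M : Matrix (Fin d) (Fin d) ℝ) (hM : M.IsHermitian)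
    (x z : Fin d → ℝ) : x ⬝ᵥ M.mulVec z = z ⬝ᵥ M.mulVec x := by
  have hT : Mᵀ = M := by
    have := hM.eq
    rwa [conjTranspose_eq_transpose_of_trivial] at this
  rw [Matrix.dotProduct_mulVec, ← Matrix.mulVec_transpose, hT, dotProduct_comm]

lemma psd_cs' {d : ℕ} {M : Matrix (Fin d) (Fin d) ℝ} (hM : M.PosSemidef)
    (x z : Fin d → ℝ) :
    (x ⬝ᵥ M.mulVec z) ^ 2 ≤ (x ⬝ᵥ M.mulVec x) * (z ⬝ᵥ M.mulVec z) := by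
  have key : ∀ θ : ℝ, 0 ≤ (z ⬝ᵥ M.mulVec z) * (θ * θ) + (2 * (x ⬝ᵥ M.mulVec z)) * θ
      + x ⬝ᵥ M.mulVec x := by
    intro θ
    have h := hM.dotProduct_mulVec_nonneg (x + θ • z)
    rw [star_trivial] at h
    have expand : (x + θ • z) ⬝ᵥ M.mulVec (x + θ • z)
        = (z ⬝ᵥ M.mulVec z) * (θ * θ) + (2 * (x ⬝ᵥ M.mulVec z)) * θ + x ⬝ᵥ M.mulVec x := by
      rw [Matrix.mulVec_add, Matrix.mulVec_smul, dotProduct_add, add_dotProduct,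
        add_dotProduct, dotProduct_smul, smul_dotProduct, smul_dotProduct, dotProduct_smul,
        dot_symm' M hM.1 z x]
      simp only [smul_eq_mul]
      ring
    linarith [expand ▸ h]
  have h2 := discrim_le_zero key
  rw [discrim] at h2
  nlinarith [h2]

lemma amgm (s t x : ℝ) (hs : 0 ≤ s) (ht : 0 ≤ t) (h : x ^ 2 ≤ s * t) :
    2 * x ≤ s + t := by
  nlinarith [sq_nonneg (s - t), sq_nonneg (s + t)]

set_option maxHeartbeats 1600000 in
/-- The minimum of `λ⟨a,Va⟩ − ⟨y,Vy⟩` over `0 ⪯ V ⪯ Σ` equals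
`½(λ⟨a,Σa⟩ − ⟨y,Σy⟩ − √((λ⟨a,Σa⟩ + ⟨y,Σy⟩)² − 4λ⟨a,Σy⟩²))`. -/
theorem sdp_lagrangian_min {d : ℕ} (y a : Fin d → ℝ)
    (hy : y ≠ 0) (ha : a ≠ 0) (l : ℝ) (hl : 0 ≤ l)
    (S : Matrix (Fin d) (Fin d) ℝ) (hS : S.PosDef) :
    IsLeast
      {x : ℝ | ∃ V : Matrix (Fin d) (Fin d) ℝ,
        V.PosSemidef ∧ (S - V).PosSemidef ∧
        x = l * (a ⬝ᵥ V.mulVec a) - y ⬝ᵥ V.mulVec y}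
      ((1 / 2) * (l * (a ⬝ᵥ S.mulVec a) - y ⬝ᵥ S.mulVec y
        - Real.sqrt ((l * (a ⬝ᵥ S.mulVec a) + y ⬝ᵥ S.mulVec y) ^ 2
            - 4 * l * (a ⬝ᵥ S.mulVec y) ^ 2))) := by
  have hSsd := hS.posSemidef
  set A := a ⬝ᵥ S.mulVec a with hAdef
  set B := y ⬝ᵥ S.mulVec y with hBdef
  set C := a ⬝ᵥ S.mulVec y with hCdef
  have hApos : 0 < A := by
    have := hS.dotProduct_mulVec_pos ha; rwa [star_trivial] at this
  have hBpos : 0 < B := by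
    have := hS.dotProduct_mulVec_pos hy; rwa [star_trivial] at this
  have hCS : C ^ 2 ≤ A * B := psd_cs' hSsd a y
  have hX : 0 ≤ (l * A + B) ^ 2 - 4 * l * C ^ 2 := by
    nlinarith [sq_nonneg (l * A - B), mul_nonneg hl (sub_nonneg.2 hCS)]
  set D := Real.sqrt ((l * A + B) ^ 2 - 4 * l * C ^ 2) with hDdef
  have hDnn : 0 ≤ D := Real.sqrt_nonneg _
  have hD2 : D ^ 2 = (l * A + B) ^ 2 - 4 * l * C ^ 2 := Real.sq_sqrt hX
  have hDge : l * A - B ≤ D := by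
    rcases le_or_gt (l * A - B) 0 with h | h
    · linarith
    · nlinarith [mul_nonneg hl (sub_nonneg.2 hCS)]
  set μ := (1 / 2 : ℝ) * (l * A - B - D) with hμdef
  have hμnp : μ ≤ 0 := by rw [hμdef]; linarith
  have hchar : μ ^ 2 - (l * A - B) * μ + l * (C ^ 2 - A * B) = 0 := by
    rw [hμdef]; linear_combination (1/4 : ℝ) * hD2
  clear_value μ D C B A
  constructor
  · -- membership
    set s := l * C with hsdef
    set t := μ - l * A with htdef
    set w := s • a + t • y with hwdef
    have hSw : S.mulVec w = s • S.mulVec a + t • S.mulVec y := by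
      rw [hwdef, Matrix.mulVec_add, Matrix.mulVec_smul, Matrix.mulVec_smul]
    have hyx : y ⬝ᵥ S.mulVec a = C := (dot_symm' S hS.1 y a).trans hCdef.symm
    have haw : a ⬝ᵥ S.mulVec w = μ * C := by
      rw [hSw, dotProduct_add, dotProduct_smul, dotProduct_smul, smul_eq_mul, smul_eq_mul,
        ← hAdef, ← hCdef, hsdef, htdef]
      ring
    have hyw : y ⬝ᵥ S.mulVec w = μ * (l * A - μ) := by
      rw [hSw, dotProduct_add, dotProduct_smul, dotProduct_smul, smul_eq_mul, smul_eq_mul,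
        hyx, ← hBdef, hsdef, htdef]
      linear_combination hchar
    have hww : w ⬝ᵥ S.mulVec w = μ * (l * C ^ 2 - (l * A - μ) ^ 2) := by
      rw [hwdef, add_dotProduct, smul_dotProduct, smul_dotProduct, ← hwdef, haw, hyw,
        smul_eq_mul, smul_eq_mul, hsdef, htdef]
      ring
    by_cases hw : w = 0
    · -- degenerate: μ = 0, take V = 0
      have hμ0 : μ = 0 := by
        have h1 : μ * C = 0 := by rw [← haw, hw]; simp
        have h2 : μ * (l * A - μ) = 0 := by rw [← hyw, hw]; simp
        rcases eq_or_lt_of_le hμnp with h | h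
        · exact h
        · exfalso
          have hC0 : C = 0 := by
            rcases mul_eq_zero.1 h1 with h' | h'
            · exact absurd h' (ne_of_lt h)
            · exact h'
          have hlA : l * A - μ = 0 := by
            rcases mul_eq_zero.1 h2 with h' | h'
            · exact absurd h' (ne_of_lt h)
            · exact h'
          nlinarith [mul_nonneg hl hApos.le]
      exact ⟨0, Matrix.PosSemidef.zero, by simpa using hSsd, by simp [hμ0]⟩
    · set K := w ⬝ᵥ S.mulVec w with hKdef
      have hKpos : 0 < K := by
        have := hS.dotProduct_mulVec_pos hw; rw [star_trivial] at this; exact hKdef ▸ this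
      set V : Matrix (Fin d) (Fin d) ℝ := K⁻¹ • vecMulVec (S.mulVec w) (S.mulVec w) with hVdef
      have hVform : ∀ u v : Fin d → ℝ,
          u ⬝ᵥ V.mulVec v = K⁻¹ * ((u ⬝ᵥ S.mulVec w) * (v ⬝ᵥ S.mulVec w)) := by
        intro u v
        rw [hVdef]
        simp only [Matrix.mulVec, dotProduct, Matrix.smul_apply, vecMulVec_apply,
          smul_eq_mul]
        rw [Finset.sum_mul_sum, Finset.mul_sum]
        refine Finset.sum_congr rfl fun i _ => ?_
        rw [Finset.mul_sum, Finset.mul_sum]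
        refine Finset.sum_congr rfl fun j _ => ?_
        ring
      have hVherm : V.IsHermitian := by
        ext i j
        simp only [hVdef, conjTranspose_apply, Matrix.smul_apply, vecMulVec_apply,
          star_trivial, smul_eq_mul]
        ring
      have hVpsd : V.PosSemidef := by
        refine Matrix.PosSemidef.of_dotProduct_mulVec_nonneg hVherm fun x => ?_
        rw [star_trivial, hVform x x]
        exact mul_nonneg (inv_nonneg.2 hKpos.le) (mul_self_nonneg _)
      have hSVpsd : (S - V).PosSemidef := by
        refine Matrix.PosSemidef.of_dotProduct_mulVec_nonneg (hS.1.sub hVherm) fun x => ?_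
        rw [star_trivial, Matrix.sub_mulVec, dotProduct_sub, hVform x x]
        have hcs := psd_cs' hSsd x w
        rw [← hKdef] at hcs
        have h1 : K⁻¹ * ((x ⬝ᵥ S.mulVec w) * (x ⬝ᵥ S.mulVec w))
            ≤ K⁻¹ * ((x ⬝ᵥ S.mulVec x) * K) := by
          apply mul_le_mul_of_nonneg_left _ (inv_nonneg.2 hKpos.le)
          rw [← sq]; exact hcs
        have h2 : K⁻¹ * ((x ⬝ᵥ S.mulVec x) * K) = x ⬝ᵥ S.mulVec x := by
          field_simp
        linarith
      refine ⟨V, hVpsd, hSVpsd, ?_⟩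
      rw [hVform a a, hVform y y, haw, hyw]
      have hKne : K ≠ 0 := ne_of_gt hKpos
      field_simp
      linear_combination μ * hww
  · -- lower bound
    rintro x ⟨V, hV, hSV, rfl⟩
    set P := a ⬝ᵥ V.mulVec a with hPdef
    set Q := y ⬝ᵥ V.mulVec y with hQdef
    set R := a ⬝ᵥ V.mulVec y with hRdef
    clear_value R Q P
    have hP : 0 ≤ P := by have := hV.dotProduct_mulVec_nonneg a; rw [star_trivial] at this; exact hPdef ▸ this
    have hQ : 0 ≤ Q := by have := hV.dotProduct_mulVec_nonneg y; rw [star_trivial] at this; exact hQdef ▸ this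
    have hPA : P ≤ A := by
      have := hSV.dotProduct_mulVec_nonneg a
      rw [star_trivial, Matrix.sub_mulVec, dotProduct_sub, ← hAdef, ← hPdef] at this
      linarith
    have hQB : Q ≤ B := by
      have := hSV.dotProduct_mulVec_nonneg y
      rw [star_trivial, Matrix.sub_mulVec, dotProduct_sub, ← hBdef, ← hQdef] at this
      linarith
    have hR : R ^ 2 ≤ P * Q := by
      have := psd_cs' hV a y
      rw [← hPdef, ← hQdef, ← hRdef] at this
      exact this
    have hCR : (C - R) ^ 2 ≤ (A - P) * (B - Q) := by
      have := psd_cs' hSV a y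
      simp only [Matrix.sub_mulVec, dotProduct_sub] at this
      rw [← hAdef, ← hBdef, ← hCdef, ← hPdef, ← hQdef, ← hRdef] at this
      exact this
    have hs : 0 ≤ l ^ 2 * (P * (A - P)) :=
      mul_nonneg (sq_nonneg l) (mul_nonneg hP (sub_nonneg.2 hPA))
    have ht : 0 ≤ Q * (B - Q) := mul_nonneg hQ (sub_nonneg.2 hQB)
    have h0 : R ^ 2 * (C - R) ^ 2 ≤ P * Q * ((A - P) * (B - Q)) :=
      mul_le_mul hR hCR (sq_nonneg (C - R)) (mul_nonneg hP hQ)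
    have hprod : (l * (R * (C - R))) ^ 2 ≤ (l ^ 2 * (P * (A - P))) * (Q * (B - Q)) := by
      have := mul_le_mul_of_nonneg_left h0 (sq_nonneg l)
      nlinarith [this]
    have hXge : 2 * (l * (R * (C - R))) ≤ l ^ 2 * (P * (A - P)) + Q * (B - Q) :=
      amgm _ _ _ hs ht hprod
    have key : (l * A - B - 2 * (l * P - Q)) ^ 2 ≤ (l * A + B) ^ 2 - 4 * l * C ^ 2 := by
      have e1 : (l * A + B) ^ 2 - 4 * l * C ^ 2 - (l * A - B - 2 * (l * P - Q)) ^ 2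
          = 4 * (l ^ 2 * (P * (A - P)) + Q * (B - Q) - 2 * (l * (R * (C - R))))
            + 4 * (l * (P * Q - R ^ 2))
            + 4 * (l * ((A - P) * (B - Q) - (C - R) ^ 2)) := by ring
      have h1 : 0 ≤ l * (P * Q - R ^ 2) := mul_nonneg hl (sub_nonneg.2 hR)
      have h2 : 0 ≤ l * ((A - P) * (B - Q) - (C - R) ^ 2) := mul_nonneg hl (sub_nonneg.2 hCR)
      linarith [hXge]
    have hE : l * A - B - 2 * (l * P - Q) ≤ D := by
      have hsq : (l * A - B - 2 * (l * P - Q)) ^ 2 ≤ D ^ 2 := by rw [hD2]; exact key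
      nlinarith [hsq, hDnn]
    rw [hμdef]
    linarith [hE]
end

section
/- Let f, g be square-integrable random variables with Var g > 0, and let Z be a random variable such that Var E[g|Z] = 0. Then Var E[f|Z] ≤ Var f − Cov(f,g)²/Var g. -/
open MeasureTheory ProbabilityTheory Real

/-- Variance of the conditional expectation `Var E[f | Z]`. -/
noncomputable def condVarExp {Ω γ : Type*} [MeasurableSpace Ω] [MeasurableSpace γ]
    (μ : Measure Ω) (f : Ω → ℝ) (Z : Ω → γ) : ℝ :=
  ProbabilityTheory.variance (μ[f | MeasurableSpace.comap Z inferInstance]) μ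

/-- Covariance `Cov(f,g)`. -/
noncomputable def cov {Ω : Type*} [MeasurableSpace Ω] (μ : Measure Ω) (f g : Ω → ℝ) : ℝ :=
  ∫ ω, (f ω - ∫ x, f x ∂μ) * (g ω - ∫ x, g x ∂μ) ∂μ

open scoped RealInnerProductSpace

section Aux

variable {Ω : Type*} [mΩ : MeasurableSpace Ω] {μ : Measure Ω}

private lemma aux_integrable_mul {F G : Ω → ℝ} (hF : MemLp F 2 μ) (hG : MemLp G 2 μ) :
    Integrable (fun ω => F ω * G ω) μ := by
  have h := MeasureTheory.L2.integrable_inner (𝕜 := ℝ) (hF.toLp F) (hG.toLp G)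
  refine h.congr ?_
  filter_upwards [hF.coeFn_toLp, hG.coeFn_toLp] with ω h1 h2
  simp [h1, h2, RCLike.inner_apply, starRingEnd_apply, star_trivial, mul_comm]

private lemma aux_inner_eq {F G : Ω → ℝ} (hF : MemLp F 2 μ) (hG : MemLp G 2 μ) :
    ⟪hF.toLp F, hG.toLp G⟫ = ∫ ω, F ω * G ω ∂μ := by
  rw [MeasureTheory.L2.inner_def]
  refine integral_congr_ae ?_
  filter_upwards [hF.coeFn_toLp, hG.coeFn_toLp] with ω h1 h2
  simp [h1, h2, RCLike.inner_apply, starRingEnd_apply, star_trivial, mul_comm]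

/-- Cauchy–Schwarz for integrals of products of `L²` functions. -/
private lemma aux_cauchy_schwarz {F G : Ω → ℝ} (hF : MemLp F 2 μ) (hG : MemLp G 2 μ) :
    (∫ ω, F ω * G ω ∂μ) ^ 2 ≤ (∫ ω, F ω ^ 2 ∂μ) * (∫ ω, G ω ^ 2 ∂μ) := by
  have key := real_inner_mul_inner_self_le (hF.toLp F) (hG.toLp G)
  rw [aux_inner_eq hF hG, aux_inner_eq hF hF, aux_inner_eq hG hG] at key
  have h1 : ∫ ω, F ω * F ω ∂μ = ∫ ω, F ω ^ 2 ∂μ := by simp [sq]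
  have h2 : ∫ ω, G ω * G ω ∂μ = ∫ ω, G ω ^ 2 ∂μ := by simp [sq]
  rw [h1, h2] at key
  calc (∫ ω, F ω * G ω ∂μ) ^ 2 = (∫ ω, F ω * G ω ∂μ) * (∫ ω, F ω * G ω ∂μ) := sq _
    _ ≤ _ := key

end Aux

section AuxM

variable {Ω : Type*} {m : MeasurableSpace Ω} [mΩ : MeasurableSpace Ω] {μ : Measure Ω}

/-- The conditional expectation of an `L²` function is in `L²`. -/
private lemma aux_memℒp_condexp (hm : m ≤ mΩ) [IsFiniteMeasure μ]
    {f : Ω → ℝ} (hf : MemLp f 2 μ) : MemLp (μ[f|m]) 2 μ := by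
  haveI : IsFiniteMeasure (μ.trim hm) := isFiniteMeasure_trim hm
  haveI : SigmaFinite (μ.trim hm) := inferInstance
  have hae : (condExpL2 ℝ ℝ hm (hf.toLp f) : Ω → ℝ) =ᵐ[μ] μ[f|m] := by
    refine ae_eq_condExp_of_forall_setIntegral_eq hm (hf.integrable one_le_two) ?_ ?_ ?_
    · intro s hs hμs
      exact ((Lp.memLp _).integrable one_le_two).integrableOn
    · intro s hs hμs
      rw [integral_condExpL2_eq hm (hf.toLp f) hs hμs.ne]
      exact setIntegral_congr_ae (hm s hs) (hf.coeFn_toLp.mono fun x hx _ => hx)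
    · exact lpMeas.aestronglyMeasurable _
  exact (Lp.memLp _).ae_eq hae

/-- Orthogonality: if `φ` is `m`-measurable and `E[w|m] = 0` a.e., then `∫ φ w = 0`. -/
private lemma aux_ortho (hm : m ≤ mΩ) [IsFiniteMeasure μ]
    {φ w : Ω → ℝ} (hφm : StronglyMeasurable[m] φ) (hφ : MemLp φ 2 μ) (hw : MemLp w 2 μ)
    (hwc : μ[w|m] =ᵐ[μ] 0) : ∫ ω, φ ω * w ω ∂μ = 0 := by
  haveI : IsFiniteMeasure (μ.trim hm) := isFiniteMeasure_trim hm
  haveI : SigmaFinite (μ.trim hm) := inferInstance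
  have hint : Integrable (φ * w) μ := aux_integrable_mul hφ hw
  have h1 : μ[φ * w|m] =ᵐ[μ] φ * μ[w|m] :=
    condExp_mul_of_stronglyMeasurable_left hφm hint (hw.integrable one_le_two)
  have h2 : μ[φ * w|m] =ᵐ[μ] 0 := by
    refine h1.trans ?_
    filter_upwards [hwc] with ω hω
    simp [hω]
  calc ∫ ω, φ ω * w ω ∂μ = ∫ ω, (φ * w) ω ∂μ := rfl
    _ = ∫ ω, (μ[φ * w|m]) ω ∂μ := (integral_condExp hm).symm
    _ = ∫ ω, (0 : Ω → ℝ) ω ∂μ := integral_congr_ae h2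
    _ = 0 := by simp

/-- Main estimate in the case where the comap σ-algebra is a sub-σ-algebra. -/
private lemma aux_main [IsProbabilityMeasure μ] (hm : m ≤ mΩ)
    {f g : Ω → ℝ} (hf : MemLp f 2 μ) (hg : MemLp g 2 μ)
    (hgv : 0 < variance g μ)
    (hZ : variance (μ[g|m]) μ = 0) :
    variance (μ[f|m]) μ ≤ variance f μ - (cov μ f g) ^ 2 / variance g μ := by
  haveI : IsFiniteMeasure (μ.trim hm) := isFiniteMeasure_trim hm
  haveI : SigmaFinite (μ.trim hm) := inferInstance
  set c : ℝ := ∫ x, f x ∂μ with hc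
  set d : ℝ := ∫ x, g x ∂μ with hd
  have hGd : MemLp (fun ω => g ω - d) 2 μ := hg.sub (memLp_const d)
  have hvarf : variance f μ = ∫ ω, (f ω - c) ^ 2 ∂μ := by
    rw [variance_eq_integral hf.aemeasurable]
  have hvarg : variance g μ = ∫ ω, (g ω - d) ^ 2 ∂μ := by
    rw [variance_eq_integral hg.aemeasurable]
  have hcov : cov μ f g = ∫ ω, (f ω - c) * (g ω - d) ∂μ := rfl
  have hf1 : Integrable f μ := hf.integrable one_le_two
  have hg1 : Integrable g μ := hg.integrable one_le_two
  set u : Ω → ℝ := μ[f|m] with hu_def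
  have hu2 : MemLp u 2 μ := aux_memℒp_condexp hm hf
  have hEu : ∫ x, u x ∂μ = c := integral_condExp hm
  set v : Ω → ℝ := fun ω => f ω - u ω with hv_def
  have hv2 : MemLp v 2 μ := hf.sub hu2
  -- E[v|m] = 0
  have hvm : μ[v|m] =ᵐ[μ] 0 := by
    have h1 : μ[(f - u)|m] =ᵐ[μ] μ[f|m] - μ[u|m] := condExp_sub hf1 integrable_condExp m
    have h2 : μ[u|m] = u :=
      condExp_of_stronglyMeasurable hm stronglyMeasurable_condExp integrable_condExp
    have h3 : μ[v|m] = μ[(f - u)|m] := rfl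
    rw [h3]
    refine h1.trans ?_
    rw [h2]
    filter_upwards with ω
    simp [hu_def]
  -- E[g|m] = d a.e.
  have hugd : μ[g|m] =ᵐ[μ] fun _ => d := by
    have hug2 : MemLp (μ[g|m]) 2 μ := aux_memℒp_condexp hm hg
    have hEug : ∫ x, (μ[g|m]) x ∂μ = d := integral_condExp hm
    have hvar0 : ∫ ω, ((μ[g|m]) ω - d) ^ 2 ∂μ = 0 := by
      have h := hZ
      rw [variance_eq_integral hug2.aemeasurable] at h
      rw [← hEug]
      exact h
    have hint : Integrable (fun ω => ((μ[g|m]) ω - d) ^ 2) μ :=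
      (hug2.sub (memLp_const d)).integrable_sq
    have h0 : (fun ω => ((μ[g|m]) ω - d) ^ 2) =ᵐ[μ] 0 :=
      (integral_eq_zero_iff_of_nonneg (fun ω => sq_nonneg _) hint).mp hvar0
    filter_upwards [h0] with ω hω
    have h1 : ((μ[g|m]) ω - d) ^ 2 = 0 := hω
    have h2 := pow_eq_zero_iff (n := 2) (by norm_num) |>.mp h1
    linarith
  -- orthogonality facts
  have hUm : StronglyMeasurable[m] (fun ω => u ω - c) :=
    stronglyMeasurable_condExp.sub stronglyMeasurable_const
  have hU2 : MemLp (fun ω => u ω - c) 2 μ := hu2.sub (memLp_const c)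
  have hortho1 : ∫ ω, (u ω - c) * v ω ∂μ = 0 := aux_ortho hm hUm hU2 hv2 hvm
  have hGdm : μ[(fun ω => g ω - d)|m] =ᵐ[μ] 0 := by
    have h1 : μ[(g - fun _ => d)|m] =ᵐ[μ] μ[g|m] - μ[(fun _ => d)|m] :=
      condExp_sub hg1 (integrable_const d) m
    have h2 : μ[(fun _ : Ω => d)|m] = fun _ => d := condExp_const hm d
    have h3 : μ[(fun ω => g ω - d)|m] = μ[(g - fun _ => d)|m] := rfl
    rw [h3]
    refine h1.trans ?_
    rw [h2]
    filter_upwards [hugd] with ω hω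
    simp [hω]
  have hortho2 : ∫ ω, (u ω - c) * (g ω - d) ∂μ = 0 := aux_ortho hm hUm hU2 hGd hGdm
  -- variance decomposition: Var f = Var u + ∫ v²
  have hfdecomp : ∀ ω, f ω - c = (u ω - c) + v ω := fun ω => by simp [hv_def]
  have hvaru : variance u μ = ∫ ω, (u ω - c) ^ 2 ∂μ := by
    rw [variance_eq_integral hu2.aemeasurable, ← hEu]
  have hsplit : variance f μ = variance u μ + ∫ ω, v ω ^ 2 ∂μ := by
    have hint1 : Integrable (fun ω => (u ω - c) ^ 2) μ := hU2.integrable_sq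
    have hint2 : Integrable (fun ω => (u ω - c) * v ω) μ := aux_integrable_mul hU2 hv2
    have hint3 : Integrable (fun ω => v ω ^ 2) μ := hv2.integrable_sq
    have hexp : ∀ ω, (f ω - c) ^ 2
        = ((u ω - c) ^ 2 + 2 * ((u ω - c) * v ω)) + v ω ^ 2 := fun ω => by
      rw [hfdecomp ω]; ring
    have e0 : ∫ ω, (f ω - c) ^ 2 ∂μ
        = ∫ ω, (((u ω - c) ^ 2 + 2 * ((u ω - c) * v ω)) + v ω ^ 2) ∂μ :=
      integral_congr_ae (Filter.Eventually.of_forall hexp)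
    have e1 : ∫ ω, (((u ω - c) ^ 2 + 2 * ((u ω - c) * v ω)) + v ω ^ 2) ∂μ
        = (∫ ω, ((u ω - c) ^ 2 + 2 * ((u ω - c) * v ω)) ∂μ) + ∫ ω, v ω ^ 2 ∂μ :=
      integral_add (hint1.add (hint2.const_mul 2)) hint3
    have e2 : ∫ ω, ((u ω - c) ^ 2 + 2 * ((u ω - c) * v ω)) ∂μ
        = (∫ ω, (u ω - c) ^ 2 ∂μ) + ∫ ω, 2 * ((u ω - c) * v ω) ∂μ :=
      integral_add hint1 (hint2.const_mul 2)
    have e3 : ∫ ω, 2 * ((u ω - c) * v ω) ∂μ = 2 * ∫ ω, (u ω - c) * v ω ∂μ :=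
      integral_const_mul 2 _
    rw [hvarf, hvaru, e0, e1, e2, e3, hortho1]
    ring
  -- covariance: cov f g = ∫ v (g - d)
  have hcov2 : cov μ f g = ∫ ω, v ω * (g ω - d) ∂μ := by
    have hint2 : Integrable (fun ω => (u ω - c) * (g ω - d)) μ := aux_integrable_mul hU2 hGd
    have hint3 : Integrable (fun ω => v ω * (g ω - d)) μ := aux_integrable_mul hv2 hGd
    rw [hcov]
    have e0 : ∫ ω, (f ω - c) * (g ω - d) ∂μ
        = ∫ ω, ((u ω - c) * (g ω - d) + v ω * (g ω - d)) ∂μ := by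
      refine integral_congr_ae (Filter.Eventually.of_forall fun ω => ?_)
      show (f ω - c) * (g ω - d) = (u ω - c) * (g ω - d) + v ω * (g ω - d)
      rw [hfdecomp ω]; ring
    have e1 : ∫ ω, ((u ω - c) * (g ω - d) + v ω * (g ω - d)) ∂μ
        = (∫ ω, (u ω - c) * (g ω - d) ∂μ) + ∫ ω, v ω * (g ω - d) ∂μ :=
      integral_add hint2 hint3
    rw [e0, e1, hortho2]
    ring
  -- Cauchy–Schwarz
  have hcs : (cov μ f g) ^ 2 ≤ (∫ ω, v ω ^ 2 ∂μ) * variance g μ := by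
    rw [hcov2, hvarg]
    exact aux_cauchy_schwarz hv2 hGd
  have hdiv : (cov μ f g) ^ 2 / variance g μ ≤ ∫ ω, v ω ^ 2 ∂μ := by
    rw [div_le_iff₀ hgv]
    exact hcs
  linarith

end AuxM

/-- If `Var E[g|Z] = 0` then `Var E[f|Z] ≤ Var f − Cov(f,g)²/Var g`. -/
theorem condVarExp_upper_of_invariance
    {Ω γ : Type*} [MeasurableSpace Ω] [MeasurableSpace γ]
    (μ : Measure Ω) [IsProbabilityMeasure μ]
    (f g : Ω → ℝ) (hf : MemLp f 2 μ) (hg : MemLp g 2 μ)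
    (hgv : 0 < variance g μ) (Z : Ω → γ)
    (hZ : condVarExp μ g Z = 0) :
    condVarExp μ f Z ≤ variance f μ - (cov μ f g) ^ 2 / variance g μ := by
  by_cases hm : MeasurableSpace.comap Z inferInstance ≤ (inferInstance : MeasurableSpace Ω)
  · exact aux_main hm hf hg hgv hZ
  · have h0 : condVarExp μ f Z = 0 := by
      unfold condVarExp
      rw [condExp_of_not_le hm]
      simp
    rw [h0]
    have hvarf : variance f μ = ∫ ω, (f ω - ∫ x, f x ∂μ) ^ 2 ∂μ := by
      rw [variance_eq_integral hf.aemeasurable]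
    have hvarg : variance g μ = ∫ ω, (g ω - ∫ x, g x ∂μ) ^ 2 ∂μ := by
      rw [variance_eq_integral hg.aemeasurable]
    have hcs : (cov μ f g) ^ 2 ≤ variance f μ * variance g μ := by
      rw [hvarf, hvarg]
      exact aux_cauchy_schwarz (hf.sub (memLp_const _)) (hg.sub (memLp_const _))
    have h1 : (cov μ f g) ^ 2 / variance g μ ≤ variance f μ := by
      rw [div_le_iff₀ hgv]
      exact hcs
    exact sub_nonneg.mpr h1
end
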